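/- Let n be even and let G be a finite simple graph on n vertices that admits a proper 2-coloring. Suppose there is a vertex x of G such that for every proper 2-coloring c of G, the color class containing x is strictly larger than the other color class. Then G has at least n/2 + 1 edges. -/

import Mathlib

open Finset

variable {V : Type*} [Fintype V] [DecidableEq V]

/-- A graph has at least `|V| - #components` edges. -/
lemma card_le_edge_add_components (G : SimpleGraph V) [DecidableRel G.Adj] :
    Fintype.card V ≤ G.edgeFinset.card + Fintype.card G.ConnectedComponent := by
  classical
  set root : V → V := fun v => (G.connectedComponentMk v).out with hrootdef
  have hroot_comp : ∀ v, G.connectedComponentMk (root v) = G.connectedComponentMk v :=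
    fun v => (G.connectedComponentMk v).out_eq
  have hreach : ∀ v, G.Reachable v (root v) := fun v =>
    (SimpleGraph.ConnectedComponent.eq.mp (hroot_comp v).symm)
  have hsame : ∀ v w, G.connectedComponentMk v = G.connectedComponentMk w → root v = root w := by
    intro v w h
    simp only [hrootdef, h]
  have H : ∀ v : V, ∃ u, v ≠ root v →
      G.Adj v u ∧ G.dist u (root v) < G.dist v (root v) := by
    intro v
    by_cases h : v = root v
    · exact ⟨v, fun hc => absurd h hc⟩
    · obtain ⟨p, hp⟩ := (hreach v).exists_walk_length_eq_dist
      obtain ⟨u, hadj, q, hq⟩ :=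
        SimpleGraph.Walk.not_nil_iff.mp (SimpleGraph.Walk.not_nil_of_ne h (p := p))
      rw [hq] at hp
      refine ⟨u, fun _ => ⟨hadj, ?_⟩⟩
      calc G.dist u (root v) ≤ q.length := SimpleGraph.dist_le q
      _ < (SimpleGraph.Walk.cons hadj q).length := by simp [SimpleGraph.Walk.length_cons]
      _ = G.dist v (root v) := hp
  choose f hf using H
  have hsplit := Finset.card_filter_add_card_filter_not
    (s := (univ : Finset V)) (p := fun v => root v = v)
  rw [Finset.card_univ] at hsplit
  have hR : (univ.filter fun v => root v = v).card ≤ Fintype.card G.ConnectedComponent := by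
    apply Finset.card_le_card_of_injOn (fun v => G.connectedComponentMk v)
      (fun v _ => Finset.mem_univ _)
    intro v hv w hw hvw
    simp only [Finset.mem_coe, Finset.mem_filter] at hv hw
    rw [← hv.2, ← hw.2]
    exact hsame v w hvw
  have hN : (univ.filter fun v => ¬ root v = v).card ≤ G.edgeFinset.card := by
    apply Finset.card_le_card_of_injOn (fun v => s(v, f v))
    · intro v hv
      simp only [Finset.mem_coe, Finset.mem_filter] at hv
      have := (hf v (fun h => hv.2 h.symm)).1
      rwa [Finset.mem_coe, SimpleGraph.mem_edgeFinset, SimpleGraph.mem_edgeSet]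
    · intro v hv w hw hvw
      simp only [Finset.mem_coe, Finset.mem_filter] at hv hw
      have hv' := hf v (fun h => hv.2 h.symm)
      have hw' := hf w (fun h => hw.2 h.symm)
      rw [Sym2.eq_iff] at hvw
      rcases hvw with ⟨h1, _⟩ | ⟨h1, h2⟩
      · exact h1
      · exfalso
        have hcomp : G.connectedComponentMk v = G.connectedComponentMk w := by
          rw [h2] at hv'
          exact SimpleGraph.ConnectedComponent.sound hv'.1.reachable
        have hr : root v = root w := hsame v w hcomp
        have d1 := hv'.2  -- dist (f v) (root v) < dist v (root v)
        rw [h2, hr] at d1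
        have d2 := hw'.2
        rw [← h1] at d2
        omega
  omega

/-- For even `n`: if a graph `G` on `n` vertices admits a proper 2-coloring and some
vertex `x` lies in the strictly larger color class of every proper 2-coloring,
then `G` has at least `n/2 + 1` edges. -/
theorem stmt_1 (n : ℕ) (hn : Even n) (G : SimpleGraph (Fin n)) [DecidableRel G.Adj]
    (hcol : ∃ c : Fin n → Bool, ∀ u v, G.Adj u v → c u ≠ c v)
    (x : Fin n)
    (hx : ∀ c : Fin n → Bool, (∀ u v, G.Adj u v → c u ≠ c v) →
      (Finset.univ.filter fun v => c v ≠ c x).card <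
      (Finset.univ.filter fun v => c v = c x).card) :
    n / 2 + 1 ≤ G.edgeFinset.card := by
  classical
  obtain ⟨c, hc⟩ := hcol
  have hbool : ∀ p q : Bool, ((!p) = q) ↔ ¬(p = q) := by decide
  set comp : Fin n → G.ConnectedComponent := G.connectedComponentMk with hcompdef
  set K0 : G.ConnectedComponent := comp x with hK0def
  set a : G.ConnectedComponent → ℕ :=
    fun K => (univ.filter fun v => comp v = K ∧ c v = c x).card with hadef
  set b : G.ConnectedComponent → ℕ :=
    fun K => (univ.filter fun v => comp v = K ∧ ¬ c v = c x).card with hbdef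
  set S : Finset G.ConnectedComponent := univ.filter fun K => K ≠ K0 ∧ b K < a K with hSdef
  set cS : Fin n → Bool := fun v => if comp v ∈ S then !(c v) else c v with hcSdef
  have hadjcomp : ∀ u v, G.Adj u v → comp u = comp v :=
    fun u v h => SimpleGraph.ConnectedComponent.sound h.reachable
  have hcS : ∀ u v, G.Adj u v → cS u ≠ cS v := by
    intro u v h
    have h2 := hc u v h
    simp only [hcSdef, hadjcomp u v h]
    by_cases hm : comp v ∈ S <;> simp [hm, h2]
  have hK0S : K0 ∉ S := by simp [hSdef]
  have hcSx : cS x = c x := by simp [hcSdef, ← hK0def, hK0S]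
  have key := hx cS hcS
  rw [hcSx] at key
  simp only [ne_eq] at key
  set A' : ℕ := (univ.filter fun v => cS v = c x).card with hA'def
  set B' : ℕ := (univ.filter fun v => ¬ cS v = c x).card with hB'def
  have hsum : A' + B' = n := by
    rw [hA'def, hB'def, Finset.card_filter_add_card_filter_not, Finset.card_univ,
      Fintype.card_fin]
  have hA2 : B' + 2 ≤ A' := by
    have hpar := Nat.even_iff.mp hn
    omega
  -- fiberwise decomposition
  have hAK : ∀ K, ((univ.filter fun v => cS v = c x).filter fun v => comp v = K).card
      = if K ∈ S then b K else a K := by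
    intro K
    rw [Finset.filter_filter]
    by_cases hm : K ∈ S
    · rw [if_pos hm, hbdef]
      congr 1
      apply Finset.filter_congr
      intro v _
      by_cases hv : comp v = K
      · simp [hcSdef, hv, hm, hbool, and_comm]
      · simp [hv]
    · rw [if_neg hm, hadef]
      congr 1
      apply Finset.filter_congr
      intro v _
      by_cases hv : comp v = K
      · simp [hcSdef, hv, hm, and_comm]
      · simp [hv]
  have hBK : ∀ K, ((univ.filter fun v => ¬ cS v = c x).filter fun v => comp v = K).card
      = if K ∈ S then a K else b K := by
    intro K
    rw [Finset.filter_filter]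
    by_cases hm : K ∈ S
    · rw [if_pos hm, hadef]
      congr 1
      apply Finset.filter_congr
      intro v _
      by_cases hv : comp v = K
      · simp [hcSdef, hv, hm, hbool, and_comm]
      · simp [hv]
    · rw [if_neg hm, hbdef]
      congr 1
      apply Finset.filter_congr
      intro v _
      by_cases hv : comp v = K
      · simp [hcSdef, hv, hm, and_comm]
      · simp [hv]
  have hAfib : A' = ∑ K, (if K ∈ S then b K else a K) := by
    rw [hA'def, Finset.card_eq_sum_card_fiberwise
      (f := comp) (t := univ) (fun v _ => mem_univ _)]
    exact Finset.sum_congr rfl fun K _ => hAK K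
  have hBfib : B' = ∑ K, (if K ∈ S then a K else b K) := by
    rw [hB'def, Finset.card_eq_sum_card_fiberwise
      (f := comp) (t := univ) (fun v _ => mem_univ _)]
    exact Finset.sum_congr rfl fun K _ => hBK K
  set d : G.ConnectedComponent → ℤ := fun K => (a K : ℤ) - b K with hddef
  have e1 : ∑ K, ((if K ∈ S then (b K : ℤ) else a K) - (if K ∈ S then (a K : ℤ) else b K))
      = d K0 - ∑ K ∈ univ.erase K0, |d K| := by
    rw [← Finset.add_sum_erase _ _ (mem_univ K0)]
    rw [if_neg hK0S, if_neg hK0S]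
    have : ∀ K ∈ univ.erase K0,
        ((if K ∈ S then (b K : ℤ) else a K) - (if K ∈ S then (a K : ℤ) else b K))
        = -|d K| := by
      intro K hK
      have hKne : K ≠ K0 := (Finset.mem_erase.mp hK).1
      by_cases hm : K ∈ S
      · have hba : b K < a K := (Finset.mem_filter.mp hm).2.2
        have : 0 < d K := by rw [hddef]; push_cast; omega
        rw [if_pos hm, if_pos hm, abs_of_pos this, hddef]
        ring
      · have hba : ¬ (K ≠ K0 ∧ b K < a K) := by
          intro hcon
          exact hm (Finset.mem_filter.mpr ⟨mem_univ _, hcon⟩)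
        have hab : a K ≤ b K := by
          by_contra hcon
          exact hba ⟨hKne, by omega⟩
        have : d K ≤ 0 := by rw [hddef]; push_cast; omega
        rw [if_neg hm, if_neg hm, abs_of_nonpos this, hddef]
        ring
    rw [Finset.sum_congr rfl this, Finset.sum_neg_distrib]
    ring
  have habs : (∑ K ∈ univ.erase K0, |d K|) + 2 ≤ d K0 := by
    have h1 : ((B' : ℤ)) + 2 ≤ A' := by exact_mod_cast hA2
    rw [hAfib, hBfib] at h1
    push_cast at h1
    rw [Finset.sum_sub_distrib] at e1
    linarith
  -- b K0 ≥ 1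
  have habs0 : (0:ℤ) ≤ ∑ K ∈ univ.erase K0, |d K| :=
    Finset.sum_nonneg fun K _ => abs_nonneg _
  have hbK0 : 1 ≤ b K0 := by
    by_contra h0
    have hb0 : b K0 = 0 := by omega
    have ha2 : 2 ≤ a K0 := by
      have h2 : (2:ℤ) ≤ d K0 := by linarith
      have hd0 : d K0 = (a K0 : ℤ) - b K0 := rfl
      rw [hd0] at h2
      omega
    have hxmem : x ∈ (univ.filter fun v => comp v = K0 ∧ c v = c x) := by
      simp [hK0def]
    have hacard : 1 < (univ.filter fun v => comp v = K0 ∧ c v = c x).card := by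
      simp only [hadef] at ha2
      omega
    obtain ⟨v, hv, hvx⟩ := Finset.exists_mem_ne hacard x
    simp only [Finset.mem_filter] at hv
    have hreach : G.Reachable x v :=
      SimpleGraph.ConnectedComponent.exact ((hv.2.1.trans hK0def).symm)
    obtain ⟨p⟩ := hreach
    obtain ⟨u, hadj, q, hq⟩ :=
      SimpleGraph.Walk.not_nil_iff.mp (SimpleGraph.Walk.not_nil_of_ne (Ne.symm hvx) (p := p))
    have hu : u ∈ (univ.filter fun v => comp v = K0 ∧ ¬ c v = c x) := by
      simp only [Finset.mem_filter, mem_univ, true_and]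
      exact ⟨(hadjcomp x u hadj).symm ▸ rfl, fun h => hc x u hadj h.symm⟩
    have : 0 < b K0 := by
      rw [hbdef]
      exact Finset.card_pos.mpr ⟨u, hu⟩
    omega
  -- sizes
  have hsize : ∀ K, a K + b K = (univ.filter fun v => comp v = K).card := by
    intro K
    rw [hadef, hbdef]
    have := Finset.card_filter_add_card_filter_not
      (s := univ.filter fun v => comp v = K) (p := fun v => c v = c x)
    rw [Finset.filter_filter, Finset.filter_filter] at this
    simpa [and_comm] using this
  have htot : ∑ K, (univ.filter fun v => comp v = K).card = n := by
    rw [← Finset.card_eq_sum_card_fiberwise (f := comp) (t := univ) (fun v _ => mem_univ _),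
      Finset.card_univ, Fintype.card_fin]
  have hlow : ∀ K ∈ univ.erase K0, (2:ℤ) ≤ ((a K : ℤ) + b K) + |d K| := by
    intro K hK
    have hne : (univ.filter fun v => comp v = K).Nonempty :=
      ⟨K.out, by simp only [Finset.mem_filter, mem_univ, true_and, hcompdef]; exact K.out_eq⟩
    have h1 : 1 ≤ a K + b K := by rw [hsize]; exact Finset.card_pos.mpr hne
    by_cases h2 : 2 ≤ a K + b K
    · have := abs_nonneg (d K)
      push_cast
      omega
    · have h3 : (a K = 1 ∧ b K = 0) ∨ (a K = 0 ∧ b K = 1) := by omega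
      rcases h3 with ⟨h, h'⟩ | ⟨h, h'⟩ <;> simp [hddef, h, h'] <;> norm_num
  have hcnt : 2 * ((univ.erase K0).card : ℤ) ≤
      ∑ K ∈ univ.erase K0, (((a K : ℤ) + b K) + |d K|) := by
    calc 2 * ((univ.erase K0).card : ℤ) = (univ.erase K0).card • (2:ℤ) := by
          rw [nsmul_eq_mul]; ring
    _ ≤ _ := Finset.card_nsmul_le_sum _ _ _ hlow
  have hnsum : (n : ℤ) = ((a K0 : ℤ) + b K0) + ∑ K ∈ univ.erase K0, ((a K : ℤ) + b K) := by
    have h2 : ∑ K, (a K + b K) = n :=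
      (Finset.sum_congr rfl fun K _ => hsize K).trans htot
    have : (n : ℤ) = ∑ K, ((a K : ℤ) + b K) := by exact_mod_cast h2.symm
    rw [this]
    exact (Finset.add_sum_erase _ _ (mem_univ K0)).symm
  have hm1 : Fintype.card G.ConnectedComponent = (univ.erase K0).card + 1 := by
    rw [Finset.card_erase_of_mem (mem_univ _), Finset.card_univ]
    have : 0 < Fintype.card G.ConnectedComponent := Fintype.card_pos_iff.mpr ⟨K0⟩
    omega
  have hfinal : 2 * (Fintype.card G.ConnectedComponent : ℤ) + 2 ≤ n := by
    rw [Finset.sum_add_distrib] at hcnt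
    have hd0 : d K0 = (a K0 : ℤ) - b K0 := rfl
    have hb1 : (1 : ℤ) ≤ b K0 := by exact_mod_cast hbK0
    rw [hm1]
    push_cast
    linarith
  have hfinalN : 2 * Fintype.card G.ConnectedComponent + 2 ≤ n := by exact_mod_cast hfinal
  have hedge := card_le_edge_add_components G
  rw [Fintype.card_fin] at hedge
  omega
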